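/- Let x ≥ 0, ε > 0, λ > 0, and define h : ℝ → ℝ by h(a) = ½(a − x)² + λ·log(a + ε) and Δ = (x − ε)² − 4(λ − x·ε). If Δ > 0, then with a⋆ = ½(x − ε + √Δ) one has min(h(0), h(a⋆)) ≤ h(a) for every a ≥ 0; that is, the minimum of h over [0, ∞) is attained at 0 or at a⋆. -/

import Mathlib

noncomputable section

/-- Scalar QLSVT minimization, positive-discriminant case: if
`Δ = (x - ε)² - 4(λ - xε) > 0` then the minimum of `h(a) = ½(a - x)² + λ log(a + ε)`
over `[0, ∞)` is attained at `0` or at `a⋆ = ½(x - ε + √Δ)`. -/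
theorem qlsvt_scalar_pos (x ε lam : ℝ) (hx : 0 ≤ x) (hε : 0 < ε) (hlam : 0 < lam)
    (h : ℝ → ℝ) (hh : ∀ a, h a = (1 / 2) * (a - x) ^ 2 + lam * Real.log (a + ε))
    (Δ : ℝ) (hΔ : Δ = (x - ε) ^ 2 - 4 * (lam - x * ε)) (hpos : 0 < Δ) :
    ∀ a : ℝ, 0 ≤ a → min (h 0) (h ((x - ε + Real.sqrt Δ) / 2)) ≤ h a := by
  intro a ha
  set r : ℝ := (x - ε + Real.sqrt Δ) / 2 with hr
  set s : ℝ := (x - ε - Real.sqrt Δ) / 2 with hs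
  have hsq : Real.sqrt Δ ^ 2 = Δ := Real.sq_sqrt hpos.le
  have hsum : r + s = x - ε := by rw [hr, hs]; ring
  have hprod : r * s = lam - x * ε := by
    have h1 : r * s = ((x - ε) ^ 2 - Real.sqrt Δ ^ 2) / 4 := by rw [hr, hs]; ring
    rw [h1, hsq, hΔ]; ring
  have hsr : s ≤ r := by
    have := Real.sqrt_nonneg Δ
    rw [hr, hs]; linarith
  -- derivative formula
  have hD : ∀ b : ℝ, -ε < b → HasDerivAt h ((b - r) * (b - s) / (b + ε)) b := by
    intro b hb
    have hb0 : (0 : ℝ) < b + ε := by linarith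
    have h1 : HasDerivAt (fun a => (1 / 2 : ℝ) * (a - x) ^ 2) (b - x) b := by
      have := (((hasDerivAt_id b).sub_const x).pow 2).const_mul (1 / 2 : ℝ)
      exact this.congr_deriv (by simp only [id_eq]; ring)
    have h2 : HasDerivAt (fun a => Real.log (a + ε)) (1 / (b + ε)) b := by
      have := (Real.hasDerivAt_log hb0.ne').comp b ((hasDerivAt_id b).add_const ε)
      simpa [one_div, Function.comp_def] using this
    have h3 := h1.add (h2.const_mul lam)
    have heq : (fun a => (1 / 2 : ℝ) * (a - x) ^ 2 + lam * Real.log (a + ε)) = h := by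
      funext t; rw [hh]
    rw [← heq]
    have key : (b - r) * (b - s) = (b - x) * (b + ε) + lam := by
      have e1 : (b - r) * (b - s) = b ^ 2 - (r + s) * b + r * s := by ring
      rw [e1, hsum, hprod]; ring
    have : (b - r) * (b - s) / (b + ε) = b - x + lam * (1 / (b + ε)) := by
      rw [key]; field_simp
    rw [this]
    exact h3
  have hcont : ContinuousOn h (Set.Ici (0 : ℝ)) := fun t ht =>
    (hD t (by have : (0:ℝ) ≤ t := ht; linarith)).continuousAt.continuousWithinAt
  rcases le_or_gt r a with hcase | hcase
  · -- a ≥ r : h monotone on [max r 0, a]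
    have hm : MonotoneOn h (Set.Icc (max r 0) a) := by
      apply monotoneOn_of_deriv_nonneg (convex_Icc _ _)
      · exact hcont.mono (fun t ht => le_trans (le_max_right _ _) ht.1)
      · intro b hb
        rw [interior_Icc] at hb
        have hb1 : max r 0 < b := hb.1
        have hb0 : (0:ℝ) < b := lt_of_le_of_lt (le_max_right _ _) hb1
        exact ((hD b (by linarith)).differentiableAt).differentiableWithinAt
      · intro b hb
        rw [interior_Icc] at hb
        have hb1 : max r 0 < b := hb.1
        have hbr : r < b := lt_of_le_of_lt (le_max_left _ _) hb1
        have hb0 : (0:ℝ) < b := lt_of_le_of_lt (le_max_right _ _) hb1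
        rw [(hD b (by linarith)).deriv]
        apply div_nonneg
        · nlinarith
        · linarith
    have hle : h (max r 0) ≤ h a := by
      apply hm ⟨le_refl _, max_le hcase ha⟩ ⟨max_le hcase ha, le_refl _⟩ (max_le hcase ha)
    rcases le_or_gt r 0 with hr0 | hr0
    · rw [max_eq_right hr0] at hle
      exact le_trans (min_le_left _ _) hle
    · rw [max_eq_left hr0.le] at hle
      exact le_trans (min_le_right _ _) hle
  · rcases le_or_gt s a with hsa | hsa
    · -- s ≤ a < r : h antitone on [a, r]
      have hm : AntitoneOn h (Set.Icc a r) := by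
        apply antitoneOn_of_deriv_nonpos (convex_Icc _ _)
        · exact hcont.mono (fun t ht => le_trans ha ht.1)
        · intro b hb
          rw [interior_Icc] at hb
          have hb0 : (0:ℝ) ≤ b := le_trans ha hb.1.le
          exact ((hD b (by linarith)).differentiableAt).differentiableWithinAt
        · intro b hb
          rw [interior_Icc] at hb
          have hb0 : (0:ℝ) ≤ b := le_trans ha hb.1.le
          rw [(hD b (by linarith)).deriv]
          apply div_nonpos_of_nonpos_of_nonneg
          · nlinarith [hb.1, hb.2, hsa]
          · linarith
      have hle : h r ≤ h a := hm ⟨le_refl _, hcase.le⟩ ⟨hcase.le, le_refl _⟩ hcase.le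
      exact le_trans (min_le_right _ _) hle
    · -- 0 ≤ a < s : h monotone on [0, a]
      have hm : MonotoneOn h (Set.Icc (0:ℝ) a) := by
        apply monotoneOn_of_deriv_nonneg (convex_Icc _ _)
        · exact hcont.mono (fun t ht => ht.1)
        · intro b hb
          rw [interior_Icc] at hb
          exact ((hD b (by linarith [hb.1])).differentiableAt).differentiableWithinAt
        · intro b hb
          rw [interior_Icc] at hb
          have hbs : b < s := lt_trans hb.2 hsa
          have hbr : b < r := lt_of_lt_of_le hbs hsr
          rw [(hD b (by linarith [hb.1])).deriv]
          apply div_nonneg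
          · nlinarith
          · linarith [hb.1]
      have hle : h 0 ≤ h a := hm ⟨le_refl _, ha⟩ ⟨ha, le_refl _⟩ ha
      exact le_trans (min_le_left _ _) hle
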